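/- For a connected regular graph G on N vertices where every vertex has degree d and |E| edges, with all distance-two concurrences summing via joint neighborhoods, the entanglement ratio satisfies Γ_v ≥ (2/(N−2))·((d−1)/d), provided all two-party concurrences for distance-one pairs vanish. -/
import Mathlib


open scoped BigOperators

/-- Joint neighborhood `n_{vw}`: number of common neighbors of `v` and `w`. -/
def jointN {V : Type*} [Fintype V] (G : SimpleGraph V)
    [DecidableRel G.Adj] (v w : V) : ℕ :=
  (Finset.univ.filter (fun u => G.Adj v u ∧ G.Adj u w)).card

lemma jointN_eq_zero {V : Type*} [Fintype V] [DecidableEq V] {G : SimpleGraph V}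
    [DecidableRel G.Adj] (htri : G.CliqueFree 3) {v w : V} (hvw : w ≠ v)
    (hdist : G.dist v w ≠ 2) : jointN G v w = 0 := by
  by_contra h
  obtain ⟨u, hu⟩ := Finset.card_pos.mp (Nat.pos_of_ne_zero h)
  simp only [Finset.mem_filter] at hu
  obtain ⟨-, h1, h2⟩ := hu
  have hnadj : ¬ G.Adj v w := fun hadj =>
    htri {v, u, w} (SimpleGraph.is3Clique_triple_iff.2 ⟨h1, hadj, h2⟩)
  have : G.dist v w ≤ 2 := by
    simpa using SimpleGraph.dist_le (SimpleGraph.Walk.cons h1 (SimpleGraph.Walk.cons h2 SimpleGraph.Walk.nil))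
  have hr : G.Reachable v w := ⟨SimpleGraph.Walk.cons h1 (SimpleGraph.Walk.cons h2 SimpleGraph.Walk.nil)⟩
  interval_cases h : G.dist v w
  · exact hvw ((hr.dist_eq_zero_iff.mp h).symm)
  · exact hnadj (SimpleGraph.dist_eq_one_iff_adj.mp h)
  · exact hdist rfl

lemma sum_jointN_all {N d : ℕ} (G : SimpleGraph (Fin N)) [DecidableRel G.Adj]
    (hreg : ∀ v, G.degree v = d) (v : Fin N) :
    ∑ w, jointN G v w = d * d := by
  unfold jointN
  simp_rw [Finset.card_filter]
  rw [Finset.sum_comm]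
  have h1 : ∀ u : Fin N,
      (∑ w : Fin N, if G.Adj v u ∧ G.Adj u w then 1 else 0)
        = if G.Adj v u then d else 0 := by
    intro u
    by_cases h : G.Adj v u
    · simp only [h, true_and, if_true]
      have : Finset.univ.filter (fun w => G.Adj u w) = G.neighborFinset u := by
        ext x; simp
      rw [← hreg u, SimpleGraph.degree, ← this, Finset.card_filter]
    · simp [h]
  simp_rw [h1]
  rw [← Finset.sum_filter, Finset.sum_const, smul_eq_mul]
  have : Finset.univ.filter (fun u => G.Adj v u) = G.neighborFinset v := by
    ext x; simp
  rw [this, ← SimpleGraph.degree, hreg v]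

lemma jointN_self {N d : ℕ} (G : SimpleGraph (Fin N)) [DecidableRel G.Adj]
    (hreg : ∀ v, G.degree v = d) (v : Fin N) : jointN G v v = d := by
  unfold jointN
  have : Finset.univ.filter (fun u => G.Adj v u ∧ G.Adj u v) = G.neighborFinset v := by
    ext x; simp only [Finset.mem_filter, Finset.mem_univ, true_and,
      SimpleGraph.mem_neighborFinset]
    exact ⟨fun h => h.1, fun h => ⟨h, h.symm⟩⟩
  rw [this]; exact hreg v

lemma sum_key {N d : ℕ} (G : SimpleGraph (Fin N)) [DecidableRel G.Adj]
    (hreg : ∀ v, G.degree v = d) (htri : G.CliqueFree 3) (v : Fin N) :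
    ∑ w ∈ Finset.univ.erase v, (if G.dist v w = 2 then jointN G v w else 0)
      = d * d - d := by
  have h1 : ∀ w ∈ Finset.univ.erase v,
      (if G.dist v w = 2 then jointN G v w else 0) = jointN G v w := by
    intro w hw
    by_cases h : G.dist v w = 2
    · simp [h]
    · simp [h, jointN_eq_zero htri (Finset.ne_of_mem_erase hw) h]
  rw [Finset.sum_congr rfl h1]
  have h2 : jointN G v v + ∑ w ∈ Finset.univ.erase v, jointN G v w
      = ∑ w, jointN G v w := Finset.add_sum_erase _ _ (Finset.mem_univ v)
  rw [sum_jointN_all G hreg v, jointN_self G hreg v] at h2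
  set S := ∑ w ∈ Finset.univ.erase v, jointN G v w with hS
  omega

/-- For a connected `d`-regular triangle-free graph on `N` vertices, where the
two-party concurrence of the excitation-state is `(2/|E|)·n_{vw}` for
distance-two pairs and vanishes otherwise, the entanglement ratio
`Γ_v = Σ_{w≠v} C_{vw}² / C_{v|rest}²` (with `C_{v|rest}² = 4d(|E|−d)/|E|²`)
satisfies `Γ_v ≥ (2/(N−2))·((d−1)/d)`. -/
theorem stmt17 {N d : ℕ} (G : SimpleGraph (Fin N)) [DecidableRel G.Adj]
    (hconn : G.Connected) (hreg : ∀ v, G.degree v = d)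
    (htri : G.CliqueFree 3) (hd : 0 < d) (hN : 2 < N) :
    ∀ v : Fin N,
      (∑ w ∈ Finset.univ.erase v,
          (if G.dist v w = 2 then
            (2 / (G.edgeFinset.card : ℝ)) * (jointN G v w : ℝ) else 0) ^ 2) /
        (4 * (d : ℝ) * ((G.edgeFinset.card : ℝ) - (d : ℝ)) / (G.edgeFinset.card : ℝ) ^ 2)
      ≥ (2 / ((N : ℝ) - 2)) * (((d : ℝ) - 1) / (d : ℝ)) := by
  intro v
  -- handshake
  have hE2 : 2 * G.edgeFinset.card = N * d := by
    have h := G.sum_degrees_eq_twice_card_edges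
    simp only [hreg, Finset.sum_const, Finset.card_univ, Fintype.card_fin,
      smul_eq_mul] at h
    omega
  set m : ℝ := (G.edgeFinset.card : ℝ) with hmdef
  have hm : 2 * m = (N : ℝ) * d := by
    rw [hmdef]; exact_mod_cast congrArg (Nat.cast : ℕ → ℝ) hE2
  have hd' : (0:ℝ) < d := by exact_mod_cast hd
  have hN' : (2:ℝ) < N := by exact_mod_cast hN
  have hm_pos : 0 < m := by nlinarith
  have hmd_pos : 0 < m - (d:ℝ) := by nlinarith
  have hD_pos : 0 < 4 * (d : ℝ) * (m - d) / m ^ 2 := by positivity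
  -- numerator bound
  have hsum : (2/m)^2 * ((d:ℝ) * d - d)
      ≤ ∑ w ∈ Finset.univ.erase v,
          (if G.dist v w = 2 then (2/m) * (jointN G v w : ℝ) else 0) ^ 2 := by
    have hkey := sum_key G hreg htri v
    have hcast : ((d * d - d : ℕ) : ℝ) = (d:ℝ) * d - d := by
      have : d ≤ d * d := Nat.le_mul_of_pos_left d hd
      push_cast [this]; ring
    calc (2/m)^2 * ((d:ℝ) * d - d)
        = ∑ w ∈ Finset.univ.erase v,
            (2/m)^2 * (((if G.dist v w = 2 then jointN G v w else 0 : ℕ)) : ℝ) := by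
          rw [← Finset.mul_sum, ← Nat.cast_sum, hkey, hcast]
      _ ≤ _ := by
          apply Finset.sum_le_sum
          intro w _
          by_cases h : G.dist v w = 2
          · simp only [h, if_true]
            rw [mul_pow]
            have h1 : ((jointN G v w : ℝ)) ≤ ((jointN G v w : ℝ))^2 := by
              have : jointN G v w ≤ (jointN G v w)^2 := by nlinarith [Nat.zero_le (jointN G v w)]
              exact_mod_cast this
            nlinarith [sq_nonneg (2/m)]
          · simp [h]
  rw [ge_iff_le]
  calc (2 / ((N : ℝ) - 2)) * (((d : ℝ) - 1) / (d : ℝ))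
      = ((2/m)^2 * ((d:ℝ) * d - d)) / (4 * (d : ℝ) * (m - d) / m ^ 2) := by
        have hN2 : (N:ℝ) - 2 ≠ 0 := by linarith
        field_simp
        nlinarith [hm, sq_nonneg m]
    _ ≤ _ := by gcongr
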